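/- Let $p$ be a prime, $H$ the subgroup of upper-triangular matrices in $\mathrm{SL}_2(\mathbb{Z}/p\mathbb{Z})$, and $A \subseteq H$ with $|A| > 2p^{5/3} + 1$. Then $A_8$ (the set of products of at most 8 elements of $A \cup A^{-1}$) contains every element of $H$ of trace $2$, i.e., every matrix $\begin{pmatrix} 1 & x \\ 0 & 1 \end{pmatrix}$ with $x \in \mathbb{Z}/p\mathbb{Z}$. -/

import Mathlib

open Finset Pointwise Matrix


noncomputable def psip (p : ℕ) [NeZero p] : AddChar (ZMod p) ℂ := ZMod.stdAddChar

lemma psip_norm (p : ℕ) [NeZero p] (z : ZMod p) : ‖psip p z‖ = 1 := by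
  rw [psip, ZMod.stdAddChar_apply, Circle.norm_coe]

lemma psip_conj (p : ℕ) [NeZero p] (z : ZMod p) :
    (starRingEnd ℂ) (psip p z) = psip p (-z) := by
  have h1 : psip p z * psip p (-z) = 1 := by
    rw [← AddChar.map_add_eq_mul, add_neg_cancel, AddChar.map_zero_eq_one]
  rw [← inv_eq_of_mul_eq_one_right h1,
    ← Complex.inv_eq_conj (by simpa using psip_norm p z)]

lemma psip_sum (p : ℕ) [NeZero p] [Fact p.Prime] (b : ZMod p) :
    ∑ x : ZMod p, psip p (x * b) = if b = 0 then (p : ℂ) else 0 := by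
  have := AddChar.sum_mulShift b (ZMod.isPrimitive_stdAddChar p)
  rw [ZMod.card] at this
  simpa [psip] using this

noncomputable def Bhat (p : ℕ) [NeZero p] (B : Finset (ZMod p)) (η : ZMod p) : ℂ :=
  ∑ b ∈ B, psip p (η * b)

lemma normsq_Bhat (p : ℕ) [NeZero p] (B : Finset (ZMod p)) (η : ZMod p) :
    ((‖Bhat p B η‖ ^ 2 : ℝ) : ℂ) = ∑ b ∈ B, ∑ b' ∈ B, psip p (η * (b - b')) := by
  have : ((‖Bhat p B η‖ ^ 2 : ℝ) : ℂ) = Bhat p B η * (starRingEnd ℂ) (Bhat p B η) := by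
    rw [Complex.mul_conj']
    push_cast
    ring
  rw [this, Bhat, map_sum, Finset.sum_mul_sum]
  refine Finset.sum_congr rfl fun b _ => Finset.sum_congr rfl fun b' _ => ?_
  rw [psip_conj, ← AddChar.map_add_eq_mul]
  ring_nf

lemma parseval (p : ℕ) [NeZero p] [Fact p.Prime] (B : Finset (ZMod p)) (c : ZMod p)
    (hc : c ≠ 0) : ∑ ξ : ZMod p, ‖Bhat p B (ξ * c)‖ ^ 2 = (p : ℝ) * B.card := by
  have key : ((∑ ξ : ZMod p, ‖Bhat p B (ξ * c)‖ ^ 2 : ℝ) : ℂ) = (((p : ℝ) * B.card : ℝ) : ℂ) := by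
    rw [Complex.ofReal_sum]
    simp_rw [normsq_Bhat]
    rw [Finset.sum_comm]
    have inner : ∀ b : ZMod p, (∑ ξ : ZMod p, ∑ b' ∈ B, psip p (ξ * c * (b - b')))
        = ∑ b' ∈ B, if b = b' then (p : ℂ) else 0 := by
      intro b
      rw [Finset.sum_comm]
      refine Finset.sum_congr rfl fun b' _ => ?_
      simp_rw [mul_assoc]
      rw [psip_sum]
      congr 1
      simp [mul_eq_zero, hc, sub_eq_zero]
    simp_rw [inner]
    rw [Finset.sum_congr rfl (fun b hb => Finset.sum_ite_eq B b (fun _ => (p:ℂ)))]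
    simp [Finset.sum_ite_mem]
    ring
  exact_mod_cast key

lemma Bhat_zero (p : ℕ) [NeZero p] (B : Finset (ZMod p)) : Bhat p B 0 = (B.card : ℂ) := by
  simp [Bhat]

lemma core (p : ℕ) [NeZero p] [Fact p.Prime] (Q B : Finset (ZMod p)) (hQ0 : (0 : ZMod p) ∉ Q)
    (hbig : (p : ℝ) ^ 2 < Q.card * (B.card : ℝ) ^ 2) (x : ZMod p) :
    ∃ q1 ∈ Q, ∃ q2 ∈ Q, ∃ b1 ∈ B, ∃ b2 ∈ B, ∃ b3 ∈ B, ∃ b4 ∈ B,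
      q1 * (b1 - b2) + q2 * (b3 - b4) = x := by
  by_contra hcon
  push_neg at hcon
  have hp2 : (2 : ℕ) ≤ p := (Fact.out : p.Prime).two_le
  set m : ℝ := (B.card : ℝ) with hm
  set k : ℝ := (Q.card : ℝ) with hk
  set W : ZMod p → ℝ := fun ξ => ∑ q ∈ Q, ‖Bhat p B (ξ * q)‖ ^ 2 with hWdef
  have hWnn : ∀ ξ, 0 ≤ W ξ := fun ξ => Finset.sum_nonneg fun q _ => by positivity
  -- W 0 = k m²
  have hW0 : W 0 = k * m ^ 2 := by
    rw [hWdef]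
    simp only [zero_mul, Bhat_zero p B]
    rw [Finset.sum_const]
    simp [hk, hm, Complex.norm_natCast]
  -- total sum
  have hWsum : ∑ ξ : ZMod p, W ξ = k * ((p : ℝ) * m) := by
    rw [hWdef, Finset.sum_comm]
    rw [Finset.sum_congr rfl (fun q hq => parseval p B q (by rintro rfl; exact hQ0 hq))]
    rw [Finset.sum_const]
    simp [hk, hm]
  -- pointwise bound
  have hWle : ∀ ξ : ZMod p, ξ ≠ 0 → W ξ ≤ (p : ℝ) * m - m ^ 2 := by
    intro ξ hξ
    have himg : W ξ = ∑ η ∈ Q.image (fun q => ξ * q), ‖Bhat p B η‖ ^ 2 := by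
      rw [Finset.sum_image (fun a _ b _ h => mul_left_cancel₀ hξ h)]
    have hsub : Q.image (fun q => ξ * q) ⊆ Finset.univ.erase 0 := by
      intro η hη
      obtain ⟨q, hq, rfl⟩ := Finset.mem_image.1 hη
      exact Finset.mem_erase.2 ⟨mul_ne_zero hξ (by rintro rfl; exact hQ0 hq), Finset.mem_univ _⟩
    have huniv : ∑ η : ZMod p, ‖Bhat p B η‖ ^ 2 = (p : ℝ) * m := by
      have := parseval p B 1 one_ne_zero
      simpa using this
    have herase : ∑ η ∈ Finset.univ.erase 0, ‖Bhat p B η‖ ^ 2 = (p : ℝ) * m - m ^ 2 := by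
      have h2 := Finset.add_sum_erase Finset.univ (fun η => ‖Bhat p B η‖ ^ 2)
        (Finset.mem_univ (0 : ZMod p))
      have h3 : ‖Bhat p B (0 : ZMod p)‖ ^ 2 = m ^ 2 := by
        rw [Bhat_zero p B]; simp [hm, Complex.norm_natCast]
      rw [huniv, h3] at h2
      linarith
    rw [himg, ← herase]
    exact Finset.sum_le_sum_of_subset_of_nonneg hsub (fun _ _ _ => by positivity)
  -- tuple expansion
  set T2 : Finset (ZMod p × ZMod p × ZMod p) := Q ×ˢ B ×ˢ B with hT2
  set f : ZMod p × ZMod p × ZMod p → ZMod p := fun z => z.1 * (z.2.1 - z.2.2) with hf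
  have hWC : ∀ ξ : ZMod p, ((W ξ : ℝ) : ℂ) = ∑ z ∈ T2, psip p (ξ * f z) := by
    intro ξ
    rw [hWdef]
    simp only
    rw [Complex.ofReal_sum]
    simp_rw [normsq_Bhat]
    rw [hT2, Finset.sum_product]
    simp_rw [Finset.sum_product]
    simp_rw [hf, mul_assoc]
  set S : ℂ := ∑ ξ : ZMod p, ((W ξ : ℝ) : ℂ) ^ 2 * psip p (ξ * (-x)) with hSdef
  have hS0 : S = 0 := by
    rw [hSdef]
    have hexp : ∀ ξ : ZMod p, ((W ξ : ℝ) : ℂ) ^ 2 * psip p (ξ * (-x))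
        = ∑ z1 ∈ T2, ∑ z2 ∈ T2, psip p (ξ * (f z1 + f z2 + -x)) := by
      intro ξ
      rw [sq, hWC, Finset.sum_mul_sum, Finset.sum_mul]
      refine Finset.sum_congr rfl fun z1 _ => ?_
      rw [Finset.sum_mul]
      refine Finset.sum_congr rfl fun z2 _ => ?_
      rw [← AddChar.map_add_eq_mul, ← AddChar.map_add_eq_mul, ← mul_add, ← mul_add]
    simp_rw [hexp]
    rw [Finset.sum_comm]
    refine Finset.sum_eq_zero fun z1 hz1 => ?_
    rw [Finset.sum_comm]
    refine Finset.sum_eq_zero fun z2 hz2 => ?_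
    rw [psip_sum, if_neg]
    obtain ⟨hq1, hbb1⟩ := Finset.mem_product.1 hz1
    obtain ⟨hb1, hb2⟩ := Finset.mem_product.1 hbb1
    obtain ⟨hq2, hbb2⟩ := Finset.mem_product.1 hz2
    obtain ⟨hb3, hb4⟩ := Finset.mem_product.1 hbb2
    intro hc
    exact hcon z1.1 hq1 z2.1 hq2 z1.2.1 hb1 z1.2.2 hb2 z2.2.1 hb3 z2.2.2 hb4
      (by simp only [hf] at hc; linear_combination hc)
  -- real part estimates
  have hterm0 : (((W 0 : ℝ) : ℂ) ^ 2 * psip p ((0 : ZMod p) * (-x))).re = W 0 ^ 2 := by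
    rw [zero_mul, AddChar.map_zero_eq_one, mul_one]
    norm_cast
  have htermge : ∀ ξ : ZMod p, -(W ξ ^ 2) ≤ (((W ξ : ℝ) : ℂ) ^ 2 * psip p (ξ * (-x))).re := by
    intro ξ
    have h1 : ‖((W ξ : ℝ) : ℂ) ^ 2 * psip p (ξ * (-x))‖ = W ξ ^ 2 := by
      rw [norm_mul, norm_pow, Complex.norm_real, psip_norm, mul_one,
        Real.norm_of_nonneg (hWnn ξ)]
    have h2 := Complex.abs_re_le_norm (((W ξ : ℝ) : ℂ) ^ 2 * psip p (ξ * (-x)))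
    rw [h1] at h2
    have := neg_abs_le ((((W ξ : ℝ) : ℂ) ^ 2 * psip p (ξ * (-x))).re)
    linarith [abs_nonneg ((((W ξ : ℝ) : ℂ) ^ 2 * psip p (ξ * (-x))).re)]
  have hsplit : S.re = W 0 ^ 2
      + ∑ ξ ∈ Finset.univ.erase 0, (((W ξ : ℝ) : ℂ) ^ 2 * psip p (ξ * (-x))).re := by
    rw [hSdef, Complex.re_sum,
      ← Finset.add_sum_erase Finset.univ _ (Finset.mem_univ (0 : ZMod p)), hterm0]
  have hsumerase : ∑ ξ ∈ Finset.univ.erase 0, W ξ = k * ((p : ℝ) * m) - k * m ^ 2 := by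
    have h4 := Finset.add_sum_erase Finset.univ W (Finset.mem_univ (0 : ZMod p))
    rw [hWsum, hW0] at h4
    linarith
  have hlow : ∑ ξ ∈ Finset.univ.erase 0, (((W ξ : ℝ) : ℂ) ^ 2 * psip p (ξ * (-x))).re
      ≥ -(((p : ℝ) * m - m ^ 2) * (k * ((p : ℝ) * m) - k * m ^ 2)) := by
    have h5 : ∑ ξ ∈ Finset.univ.erase 0, -(W ξ ^ 2)
        ≤ ∑ ξ ∈ Finset.univ.erase 0, (((W ξ : ℝ) : ℂ) ^ 2 * psip p (ξ * (-x))).re :=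
      Finset.sum_le_sum fun ξ _ => htermge ξ
    have h6 : ∑ ξ ∈ Finset.univ.erase 0, W ξ ^ 2
        ≤ ∑ ξ ∈ Finset.univ.erase 0, ((p : ℝ) * m - m ^ 2) * W ξ :=
      Finset.sum_le_sum fun ξ hξ => by
        have h7 := hWle ξ (Finset.mem_erase.1 hξ).1
        nlinarith [hWnn ξ]
    rw [← Finset.mul_sum, hsumerase] at h6
    rw [Finset.sum_neg_distrib] at h5
    linarith
  -- numeric conclusion
  have hmnn : (0 : ℝ) ≤ m := by rw [hm]; positivity
  have hknn : (0 : ℝ) ≤ k := by rw [hk]; positivity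
  have hmp : m ≤ (p : ℝ) := by
    rw [hm]
    exact_mod_cast (Finset.card_le_univ B).trans_eq (Finset.card_univ.trans (ZMod.card p))
  have hppos : (2 : ℝ) ≤ (p : ℝ) := by exact_mod_cast hp2
  have hSre : 0 < S.re := by
    rw [hsplit]
    have e1 : ((p : ℝ) - m) ^ 2 ≤ (p : ℝ) ^ 2 := by nlinarith
    have e2 : ((p : ℝ) * m - m ^ 2) * (k * ((p : ℝ) * m) - k * m ^ 2)
        = (k * m ^ 2) * ((p : ℝ) - m) ^ 2 := by ring
    have hkm : (0 : ℝ) < k * m ^ 2 := lt_of_le_of_lt (by positivity) hbig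
    have e3 : (k * m ^ 2) * ((p : ℝ) - m) ^ 2 ≤ (k * m ^ 2) * (p : ℝ) ^ 2 :=
      mul_le_mul_of_nonneg_left e1 (le_of_lt hkm)
    have e4 : (k * m ^ 2) * ((p : ℝ)) ^ 2 < (k * m ^ 2) * (k * m ^ 2) :=
      (mul_lt_mul_iff_right₀ hkm).2 hbig
    have e5 : W 0 ^ 2 = (k * m ^ 2) * (k * m ^ 2) := by rw [hW0]; ring
    linarith
  rw [hS0] at hSre
  simp at hSre



variable {R : Type*} [CommRing R]

def Umat (x : R) : Matrix.SpecialLinearGroup (Fin 2) R :=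
  ⟨!![1, x; 0, 1], by simp [Matrix.det_fin_two_of]⟩

@[simp] lemma Umat_coe (x : R) :
    (Umat x : Matrix (Fin 2) (Fin 2) R) = !![1, x; 0, 1] := rfl

lemma Umat_mul (x y : R) : Umat x * Umat y = Umat (x + y) := by
  apply Subtype.ext
  rw [Matrix.SpecialLinearGroup.coe_mul]
  ext i j
  fin_cases i <;> fin_cases j <;>
    simp [Umat, Matrix.mul_apply, Fin.sum_univ_succ]; ring

lemma det_entries (g : Matrix.SpecialLinearGroup (Fin 2) R)
    (hg : (g : Matrix (Fin 2) (Fin 2) R) 1 0 = 0) :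
    (g : Matrix (Fin 2) (Fin 2) R) 0 0 * (g : Matrix (Fin 2) (Fin 2) R) 1 1 = 1 := by
  have := g.2
  rw [Matrix.det_fin_two] at this
  rw [hg] at this
  linear_combination this

lemma conj_Umat (g : Matrix.SpecialLinearGroup (Fin 2) R)
    (hg : (g : Matrix (Fin 2) (Fin 2) R) 1 0 = 0) (x : R) :
    g * Umat x * g⁻¹ = Umat ((g : Matrix (Fin 2) (Fin 2) R) 0 0 ^ 2 * x) := by
  have hdet := det_entries g hg
  apply Subtype.ext
  rw [Matrix.SpecialLinearGroup.coe_mul, Matrix.SpecialLinearGroup.coe_mul,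
    Matrix.SpecialLinearGroup.SL2_inv_expl g]
  ext i j
  fin_cases i <;> fin_cases j <;>
    simp [Umat, Matrix.mul_apply, Fin.sum_univ_succ, hg, Matrix.mul_apply (N := (_ : Fin 2 → Fin 2 → R))] <;>
    (first | ring1 | linear_combination (1 - x) * hdet | linear_combination x * hdet | linear_combination hdet | linear_combination ((g : Matrix (Fin 2) (Fin 2) R) 0 0 * x) * hdet)

lemma fiber_mul_inv (b b' : Matrix.SpecialLinearGroup (Fin 2) R)
    (h10 : (b : Matrix (Fin 2) (Fin 2) R) 1 0 = 0)
    (h10' : (b' : Matrix (Fin 2) (Fin 2) R) 1 0 = 0)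
    (heq : (b : Matrix (Fin 2) (Fin 2) R) 0 0 = (b' : Matrix (Fin 2) (Fin 2) R) 0 0) :
    b * b'⁻¹ = Umat ((b : Matrix (Fin 2) (Fin 2) R) 0 0 *
      ((b : Matrix (Fin 2) (Fin 2) R) 0 1 - (b' : Matrix (Fin 2) (Fin 2) R) 0 1)) := by
  have hdet := det_entries b h10
  have hdet' := det_entries b' h10'
  apply Subtype.ext
  rw [Matrix.SpecialLinearGroup.coe_mul, Matrix.SpecialLinearGroup.SL2_inv_expl b']
  ext i j
  fin_cases i <;> fin_cases j <;>
    simp [Umat, Matrix.mul_apply, Fin.sum_univ_succ, h10, h10', Matrix.mul_apply (N := (_ : Fin 2 → Fin 2 → R))] <;>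
    (first
      | ring1
      | linear_combination hdet' + ((b' : Matrix (Fin 2) (Fin 2) R) 1 1) * heq
      | linear_combination (-((b : Matrix (Fin 2) (Fin 2) R) 0 1)) * heq
      | linear_combination hdet - ((b : Matrix (Fin 2) (Fin 2) R) 1 1) * heq
      | linear_combination heq
      | linear_combination hdet
      | linear_combination hdet')

lemma mem_pow8 {G : Type*} [Group G] [DecidableEq G] (s : Finset G)
    {a1 a2 a3 a4 a5 a6 a7 a8 : G} (h1 : a1 ∈ s) (h2 : a2 ∈ s) (h3 : a3 ∈ s)
    (h4 : a4 ∈ s) (h5 : a5 ∈ s) (h6 : a6 ∈ s) (h7 : a7 ∈ s) (h8 : a8 ∈ s) :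
    a1 * a2 * a3 * a4 * a5 * a6 * a7 * a8 ∈ s ^ 8 := by
  have hs : s ^ 8 = s * s * s * s * s * s * s * s := by
    rw [show (8 : ℕ) = 7 + 1 from rfl, pow_succ, show (7 : ℕ) = 6 + 1 from rfl, pow_succ,
      show (6 : ℕ) = 5 + 1 from rfl, pow_succ, show (5 : ℕ) = 4 + 1 from rfl, pow_succ,
      show (4 : ℕ) = 3 + 1 from rfl, pow_succ, show (3 : ℕ) = 2 + 1 from rfl, pow_succ,
      show (2 : ℕ) = 1 + 1 from rfl, pow_succ, pow_one]
  rw [hs]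
  exact Finset.mul_mem_mul (Finset.mul_mem_mul (Finset.mul_mem_mul (Finset.mul_mem_mul
    (Finset.mul_mem_mul (Finset.mul_mem_mul (Finset.mul_mem_mul h1 h2) h3) h4) h5) h6) h7) h8

set_option maxHeartbeats 1000000 in
theorem stmt12 (p : ℕ) (hp : p.Prime)
    [DecidableEq (Matrix.SpecialLinearGroup (Fin 2) (ZMod p))]
    (A : Finset (Matrix.SpecialLinearGroup (Fin 2) (ZMod p)))
    (hupper : ∀ g ∈ A, (g : Matrix (Fin 2) (Fin 2) (ZMod p)) 1 0 = 0)
    (hcard : (A.card : ℝ) > 2 * (p : ℝ) ^ ((5 : ℝ) / 3) + 1) :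
    ∀ x : ZMod p, ∃ h ∈ (A ∪ A⁻¹ ∪ {1}) ^ 8,
      (h : Matrix (Fin 2) (Fin 2) (ZMod p)) = !![1, x; 0, 1] := by
  intro x
  haveI hfact : Fact p.Prime := ⟨hp⟩
  haveI : NeZero p := ⟨hp.ne_zero⟩
  set R : ℝ := (p : ℝ) ^ ((5 : ℝ) / 3) with hR
  have hp0 : (0 : ℝ) < p := by exact_mod_cast hp.pos
  have hp1 : (1 : ℝ) ≤ p := by exact_mod_cast hp.one_lt.le
  have hRnn : 0 ≤ R := Real.rpow_nonneg hp0.le _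
  -- A nonempty
  have hA0 : A.Nonempty := by
    rw [← Finset.card_pos]
    have : (0 : ℝ) < A.card := lt_of_le_of_lt (by linarith) hcard
    exact_mod_cast this
  set dg : Matrix.SpecialLinearGroup (Fin 2) (ZMod p) → ZMod p :=
    fun g => (g : Matrix (Fin 2) (Fin 2) (ZMod p)) 0 0 with hdg
  have hdgne : ∀ g ∈ A, dg g ≠ 0 := by
    intro g hg h0
    have hd := det_entries g (hupper g hg)
    have h0' : (g : Matrix (Fin 2) (Fin 2) (ZMod p)) 0 0 = 0 := h0
    rw [h0', zero_mul] at hd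
    exact zero_ne_one hd
  set T := A.image dg with hT
  obtain ⟨a, haT, hamax⟩ := Finset.exists_max_image T
    (fun t => (A.filter fun g => dg g = t).card) (hA0.image dg)
  have ha0 : a ≠ 0 := by
    obtain ⟨g, hg, rfl⟩ := Finset.mem_image.1 haT
    exact hdgne g hg
  set Fb := A.filter (fun g => dg g = a) with hFb
  have hAcard : A.card ≤ Fb.card * T.card :=
    Finset.card_le_mul_card_image A Fb.card (fun b hb => hamax b hb)
  -- B set
  set Bs := Fb.image (fun (g : Matrix.SpecialLinearGroup (Fin 2) (ZMod p)) => ((g : Matrix (Fin 2) (Fin 2) (ZMod p)) 0 1)) with hBs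
  have hBcard : Bs.card = Fb.card := by
    rw [hBs]
    apply Finset.card_image_of_injOn
    intro g hg g' hg' hee
    obtain ⟨hgA, hga⟩ := Finset.mem_filter.1 hg
    obtain ⟨hg'A, hg'a⟩ := Finset.mem_filter.1 hg'
    have h10 := hupper g hgA
    have h10' := hupper g' hg'A
    have hga2 : (g : Matrix (Fin 2) (Fin 2) (ZMod p)) 0 0 = a := hga
    have hg'a2 : (g' : Matrix (Fin 2) (Fin 2) (ZMod p)) 0 0 = a := hg'a
    have h00 : (g : Matrix (Fin 2) (Fin 2) (ZMod p)) 0 0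
        = (g' : Matrix (Fin 2) (Fin 2) (ZMod p)) 0 0 := by rw [hga2, hg'a2]
    have h11 : (g : Matrix (Fin 2) (Fin 2) (ZMod p)) 1 1
        = (g' : Matrix (Fin 2) (Fin 2) (ZMod p)) 1 1 := by
      have d1 := det_entries g h10
      have d2 := det_entries g' h10'
      rw [← h00] at d2
      have hgne : (g : Matrix (Fin 2) (Fin 2) (ZMod p)) 0 0 ≠ 0 := by
        rw [hga2]; exact ha0
      exact mul_left_cancel₀ hgne (d1.trans d2.symm)
    have hee' : (g : Matrix (Fin 2) (Fin 2) (ZMod p)) 0 1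
        = (g' : Matrix (Fin 2) (Fin 2) (ZMod p)) 0 1 := hee
    apply Subtype.ext
    rw [Matrix.eta_fin_two (g : Matrix (Fin 2) (Fin 2) (ZMod p)),
      Matrix.eta_fin_two (g' : Matrix (Fin 2) (Fin 2) (ZMod p)), h00, hee', h10, h10', h11]
  -- Q set
  set Qs := T.image (fun t => t ^ 2 * a) with hQs
  have hQ0 : (0 : ZMod p) ∉ Qs := by
    intro h0
    obtain ⟨t, htT, hte⟩ := Finset.mem_image.1 h0
    obtain ⟨g, hg, rfl⟩ := Finset.mem_image.1 htT
    exact (mul_ne_zero (pow_ne_zero 2 (hdgne g hg)) ha0) hte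
  have hTQ : T.card ≤ 2 * Qs.card := by
    rw [hQs]
    apply Finset.card_le_mul_card_image
    intro v hv
    show (T.filter (fun t => t ^ 2 * a = v)).card ≤ 2
    set fib := T.filter (fun t => t ^ 2 * a = v) with hfib
    rcases fib.eq_empty_or_nonempty with he | ⟨t, ht⟩
    · rw [he]; simp
    · have hsub : fib ⊆ {t, -t} := by
        intro u hu
        obtain ⟨huT, hue⟩ := Finset.mem_filter.1 hu
        obtain ⟨htT, hte⟩ := Finset.mem_filter.1 ht
        have : u ^ 2 * a = t ^ 2 * a := by rw [hue, hte]
        have h2 : u ^ 2 = t ^ 2 := mul_right_cancel₀ ha0 this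
        have h3 : u * u = t * t := by
          rw [← pow_two, ← pow_two, h2]
        rcases mul_self_eq_mul_self_iff.1 h3 with h | h
        · simp [h]
        · simp [h]
      calc fib.card ≤ ({t, -t} : Finset (ZMod p)).card := Finset.card_le_card hsub
        _ ≤ 2 := Finset.card_insert_le _ _ |>.trans (by simp)
  have hTp : T.card ≤ p := le_trans (Finset.card_le_univ T)
    (le_of_eq (Finset.card_univ.trans (ZMod.card p)))
  -- numeric
  have hbig : (p : ℝ) ^ 2 < Qs.card * (Bs.card : ℝ) ^ 2 := by
    have c1 : (A.card : ℝ) ≤ (Fb.card : ℝ) * (T.card : ℝ) := by exact_mod_cast hAcard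
    have c2 : (T.card : ℝ) ≤ 2 * (Qs.card : ℝ) := by exact_mod_cast hTQ
    have c3 : (T.card : ℝ) ≤ (p : ℝ) := by exact_mod_cast hTp
    have hkFnn : (0 : ℝ) ≤ (Fb.card : ℝ) := by positivity
    have hkQnn : (0 : ℝ) ≤ (Qs.card : ℝ) := by positivity
    have s1 : 2 * R + 1 < (Fb.card : ℝ) * (T.card : ℝ) := lt_of_lt_of_le hcard c1
    have u1 : (Fb.card : ℝ) * (T.card : ℝ) ≤ (Fb.card : ℝ) * (2 * (Qs.card : ℝ)) :=
      mul_le_mul_of_nonneg_left c2 hkFnn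
    have u2 : (Fb.card : ℝ) * (T.card : ℝ) ≤ (Fb.card : ℝ) * (p : ℝ) :=
      mul_le_mul_of_nonneg_left c3 hkFnn
    have t1 : R < (Qs.card : ℝ) * (Fb.card : ℝ) := by nlinarith
    have t2 : 2 * R + 1 < (p : ℝ) * (Fb.card : ℝ) := by nlinarith
    have hR2 : (p : ℝ) ^ 3 ≤ R * R := by
      have e1 : R * R = (p : ℝ) ^ ((10 : ℝ) / 3) := by
        rw [hR, ← Real.rpow_add hp0]; norm_num
      have e2 : (p : ℝ) ^ ((3 : ℕ) : ℝ) ≤ (p : ℝ) ^ ((10 : ℝ) / 3) :=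
        Real.rpow_le_rpow_of_exponent_le hp1 (by norm_num)
      rw [Real.rpow_natCast] at e2
      rw [e1]; exact_mod_cast e2
    have t3 : R * (2 * R + 1) < ((Qs.card : ℝ) * (Fb.card : ℝ)) * ((p : ℝ) * (Fb.card : ℝ)) :=
      mul_lt_mul'' t1 t2 hRnn (by linarith)
    have t4 : (p : ℝ) * (p : ℝ) ^ 2 < (p : ℝ) * ((Qs.card : ℝ) * (Fb.card : ℝ) ^ 2) := by
      nlinarith
    have t5 := lt_of_mul_lt_mul_left t4 hp0.le
    rw [hBcard]
    exact t5
  rw [← hBcard] at hAcard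
  obtain ⟨q1, hq1, q2, hq2, b1, hb1, b2, hb2, b3, hb3, b4, hb4, heq⟩ :=
    core p Qs Bs hQ0 hbig x
  -- unpack
  obtain ⟨t1, ht1T, hq1e⟩ := Finset.mem_image.1 hq1
  obtain ⟨t2, ht2T, hq2e⟩ := Finset.mem_image.1 hq2
  obtain ⟨g1, hg1A, hdg1⟩ := Finset.mem_image.1 ht1T
  obtain ⟨g2, hg2A, hdg2⟩ := Finset.mem_image.1 ht2T
  obtain ⟨β1, hβ1, hb1e⟩ := Finset.mem_image.1 hb1
  obtain ⟨β2, hβ2, hb2e⟩ := Finset.mem_image.1 hb2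
  obtain ⟨β3, hβ3, hb3e⟩ := Finset.mem_image.1 hb3
  obtain ⟨β4, hβ4, hb4e⟩ := Finset.mem_image.1 hb4
  obtain ⟨hβ1A, hβ1a⟩ := Finset.mem_filter.1 hβ1
  obtain ⟨hβ2A, hβ2a⟩ := Finset.mem_filter.1 hβ2
  obtain ⟨hβ3A, hβ3a⟩ := Finset.mem_filter.1 hβ3
  obtain ⟨hβ4A, hβ4a⟩ := Finset.mem_filter.1 hβ4
  have hβ1a' : (β1 : Matrix (Fin 2) (Fin 2) (ZMod p)) 0 0 = a := hβ1a
  have hβ2a' : (β2 : Matrix (Fin 2) (Fin 2) (ZMod p)) 0 0 = a := hβ2a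
  have hβ3a' : (β3 : Matrix (Fin 2) (Fin 2) (ZMod p)) 0 0 = a := hβ3a
  have hβ4a' : (β4 : Matrix (Fin 2) (Fin 2) (ZMod p)) 0 0 = a := hβ4a
  have hb1e' : (β1 : Matrix (Fin 2) (Fin 2) (ZMod p)) 0 1 = b1 := hb1e
  have hb2e' : (β2 : Matrix (Fin 2) (Fin 2) (ZMod p)) 0 1 = b2 := hb2e
  have hb3e' : (β3 : Matrix (Fin 2) (Fin 2) (ZMod p)) 0 1 = b3 := hb3e
  have hb4e' : (β4 : Matrix (Fin 2) (Fin 2) (ZMod p)) 0 1 = b4 := hb4e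
  have hdg1' : (g1 : Matrix (Fin 2) (Fin 2) (ZMod p)) 0 0 = t1 := hdg1
  have hdg2' : (g2 : Matrix (Fin 2) (Fin 2) (ZMod p)) 0 0 = t2 := hdg2
  -- build element
  refine ⟨g1 * β1 * β2⁻¹ * g1⁻¹ * g2 * β3 * β4⁻¹ * g2⁻¹, ?_, ?_⟩
  · apply mem_pow8 <;>
    · first
      | exact Finset.mem_union_left _ (Finset.mem_union_left _ ‹_›)
      | exact Finset.mem_union_left _ (Finset.mem_union_right _ (Finset.inv_mem_inv ‹_›))
  · have e1 : β1 * β2⁻¹ = Umat (a * (b1 - b2)) := by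
      have := fiber_mul_inv β1 β2 (hupper β1 hβ1A) (hupper β2 hβ2A)
        (by rw [hβ1a', hβ2a'])
      rwa [hβ1a', hb1e', hb2e'] at this
    have e2 : β3 * β4⁻¹ = Umat (a * (b3 - b4)) := by
      have := fiber_mul_inv β3 β4 (hupper β3 hβ3A) (hupper β4 hβ4A)
        (by rw [hβ3a', hβ4a'])
      rwa [hβ3a', hb3e', hb4e'] at this
    have e3 : g1 * Umat (a * (b1 - b2)) * g1⁻¹ = Umat (t1 ^ 2 * (a * (b1 - b2))) := by
      have := conj_Umat g1 (hupper g1 hg1A) (a * (b1 - b2))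
      rwa [hdg1'] at this
    have e4 : g2 * Umat (a * (b3 - b4)) * g2⁻¹ = Umat (t2 ^ 2 * (a * (b3 - b4))) := by
      have := conj_Umat g2 (hupper g2 hg2A) (a * (b3 - b4))
      rwa [hdg2'] at this
    have e5 : g1 * β1 * β2⁻¹ * g1⁻¹ * g2 * β3 * β4⁻¹ * g2⁻¹ = Umat x := by
      have assoc : g1 * β1 * β2⁻¹ * g1⁻¹ * g2 * β3 * β4⁻¹ * g2⁻¹
          = (g1 * (β1 * β2⁻¹) * g1⁻¹) * (g2 * (β3 * β4⁻¹) * g2⁻¹) := by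
        simp only [mul_assoc]
      rw [assoc, e1, e2, e3, e4, Umat_mul]
      congr 1
      rw [← heq, ← hq1e, ← hq2e]
      ring
    rw [e5, Umat_coe]
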